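/- Let f be a homeomorphism of a metric space M, let A : M → GL(V), and fix x, y ∈ M and β > 0. Suppose there exist constants c > 0, L > 0 and θ ∈ (0,1) such that for all n ≥ 0: (a) ‖A(fⁿy)⁻¹∘A(fⁿx) − Id‖ ≤ c·dist(fⁿx, fⁿy)^β and ‖A(fⁿx)⁻¹∘A(fⁿy) − Id‖ ≤ c·dist(fⁿx, fⁿy)^β; (b) ‖(Aⁿ_y)⁻¹‖·‖Aⁿ_x‖·dist(fⁿx, fⁿy)^β ≤ L·θⁿ·dist(x,y)^β and ‖(Aⁿ_x)⁻¹‖·‖Aⁿ_y‖·dist(fⁿx, fⁿy)^β ≤ L·θⁿ·dist(x,y)^β. Then the limits H_{x,y} = limₙ (Aⁿ_y)⁻¹∘Aⁿ_x and H_{y,x} = limₙ (Aⁿ_x)⁻¹∘Aⁿ_y exist in operator norm, these limits are mutually inverse operators (in particular H_{x,y} is invertible), and ‖H_{x,y} − Id‖ ≤ c·L·(1 − θ)⁻¹·dist(x,y)^β. -/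

import Mathlib

open Filter Topology

/-- The cocycle generated by `A : M → GL(V)` over `f`: `A⁰_x = Id` and
`Aⁿ_x = A(f^{n−1}x) ∘ ⋯ ∘ A(fx) ∘ A(x)`. -/
noncomputable def coc {M : Type*} {V : Type*} [NormedAddCommGroup V] [NormedSpace ℝ V]
    (f : M → M) (A : M → (V →L[ℝ] V)ˣ) : ℕ → M → (V →L[ℝ] V)ˣ
  | 0, _ => 1
  | n + 1, x => coc f A n (f x) * A x

lemma coc_succ {M : Type*} {V : Type*} [NormedAddCommGroup V] [NormedSpace ℝ V]
    (f : M → M) (A : M → (V →L[ℝ] V)ˣ) (n : ℕ) (x : M) :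
    coc f A (n + 1) x = A (f^[n] x) * coc f A n x := by
  induction n generalizing x with
  | zero => simp [coc]
  | succ n ih =>
      rw [show coc f A (n + 2) x = coc f A (n + 1) (f x) * A x from rfl, ih,
        ← Function.iterate_succ_apply,
        show coc f A (n + 1) x = coc f A n (f x) * A x from rfl, mul_assoc]

lemma holonomy_aux {V : Type*} [NormedAddCommGroup V] [NormedSpace ℝ V] [CompleteSpace V]
    {M : Type*} [MetricSpace M] (f : M → M) (A : M → (V →L[ℝ] V)ˣ)
    (x y : M) (β : ℝ) (c L θ D : ℝ) (hc : 0 < c)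
    (hθ0 : 0 < θ) (hθ1 : θ < 1)
    (ha : ∀ n : ℕ,
      ‖(((A (f^[n] y))⁻¹ * A (f^[n] x) : (V →L[ℝ] V)ˣ) : V →L[ℝ] V) - 1‖ ≤
        c * dist (f^[n] x) (f^[n] y) ^ β)
    (hb : ∀ n : ℕ,
      ‖(((coc f A n y)⁻¹ : (V →L[ℝ] V)ˣ) : V →L[ℝ] V)‖ *
        ‖((coc f A n x : (V →L[ℝ] V)ˣ) : V →L[ℝ] V)‖ *
        dist (f^[n] x) (f^[n] y) ^ β ≤ L * θ ^ n * D) :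
    ∃ H : V →L[ℝ] V,
      Tendsto (fun n : ℕ =>
          (((coc f A n y)⁻¹ * coc f A n x : (V →L[ℝ] V)ˣ) : V →L[ℝ] V))
        atTop (𝓝 H) ∧ ‖H - 1‖ ≤ c * L * (1 - θ)⁻¹ * D := by
  set g : ℕ → (V →L[ℝ] V) := fun n =>
    (((coc f A n y)⁻¹ * coc f A n x : (V →L[ℝ] V)ˣ) : V →L[ℝ] V) with hg
  have key : ∀ n : ℕ, g (n + 1) - g n =
      (((coc f A n y)⁻¹ : (V →L[ℝ] V)ˣ) : V →L[ℝ] V) *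
        ((((A (f^[n] y))⁻¹ * A (f^[n] x) : (V →L[ℝ] V)ˣ) : V →L[ℝ] V) - 1) *
        ((coc f A n x : (V →L[ℝ] V)ˣ) : V →L[ℝ] V) := by
    intro n
    simp only [hg, coc_succ, mul_inv_rev, Units.val_mul]
    noncomm_ring
  have hbound : ∀ n : ℕ, ‖g (n + 1) - g n‖ ≤ (c * L * D) * θ ^ n := by
    intro n
    rw [key n]
    set a := (((coc f A n y)⁻¹ : (V →L[ℝ] V)ˣ) : V →L[ℝ] V)
    set m := ((((A (f^[n] y))⁻¹ * A (f^[n] x) : (V →L[ℝ] V)ˣ) : V →L[ℝ] V) - 1)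
    set e := ((coc f A n x : (V →L[ℝ] V)ˣ) : V →L[ℝ] V)
    calc ‖a * m * e‖ ≤ ‖a‖ * ‖m‖ * ‖e‖ :=
          (norm_mul_le _ _).trans (by gcongr; exact norm_mul_le _ _)
      _ ≤ ‖a‖ * (c * dist (f^[n] x) (f^[n] y) ^ β) * ‖e‖ := by
          gcongr; exact ha n
      _ = c * (‖a‖ * ‖e‖ * dist (f^[n] x) (f^[n] y) ^ β) := by ring
      _ ≤ c * (L * θ ^ n * D) := by gcongr ?_ * ?_; exact hb n
      _ = (c * L * D) * θ ^ n := by ring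
  have hsum : Summable fun n : ℕ => g (n + 1) - g n := by
    apply Summable.of_norm
    exact Summable.of_nonneg_of_le (fun n => norm_nonneg _) hbound
      ((summable_geometric_of_lt_one hθ0.le hθ1).mul_left _)
  have htel : ∀ n : ℕ, ∑ i ∈ Finset.range n, (g (i + 1) - g i) = g n - 1 := by
    intro n
    rw [Finset.sum_range_sub g n]
    simp [hg, coc]
  refine ⟨(∑' n : ℕ, (g (n + 1) - g n)) + 1, ?_, ?_⟩
  · have h1 := hsum.hasSum.tendsto_sum_nat
    have h2 : Tendsto (fun n => g n - 1) atTop (𝓝 (∑' n : ℕ, (g (n + 1) - g n))) := by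
      simpa only [htel] using h1
    have h3 := h2.add (tendsto_const_nhds (x := (1 : V →L[ℝ] V)))
    simpa using h3
  · rw [add_sub_cancel_right]
    have hgs : HasSum (fun n : ℕ => (c * L * D) * θ ^ n) ((c * L * D) * (1 - θ)⁻¹) :=
      (hasSum_geometric_of_lt_one hθ0.le hθ1).mul_left _
    calc ‖∑' n : ℕ, (g (n + 1) - g n)‖ ≤ (c * L * D) * (1 - θ)⁻¹ :=
          tsum_of_norm_bounded hgs hbound
      _ = c * L * (1 - θ)⁻¹ * D := by ring

theorem stmt_2 {V : Type*} [NormedAddCommGroup V] [NormedSpace ℝ V] [CompleteSpace V]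
    {M : Type*} [MetricSpace M] (f : M ≃ₜ M) (A : M → (V →L[ℝ] V)ˣ)
    (x y : M) (β : ℝ) (hβ : 0 < β) (c L θ : ℝ) (hc : 0 < c) (hL : 0 < L)
    (hθ0 : 0 < θ) (hθ1 : θ < 1)
    (ha : ∀ n : ℕ,
      ‖(((A ((⇑f)^[n] y))⁻¹ * A ((⇑f)^[n] x) : (V →L[ℝ] V)ˣ) : V →L[ℝ] V) - 1‖ ≤
          c * dist ((⇑f)^[n] x) ((⇑f)^[n] y) ^ β ∧
        ‖(((A ((⇑f)^[n] x))⁻¹ * A ((⇑f)^[n] y) : (V →L[ℝ] V)ˣ) : V →L[ℝ] V) - 1‖ ≤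
          c * dist ((⇑f)^[n] x) ((⇑f)^[n] y) ^ β)
    (hb : ∀ n : ℕ,
      ‖(((coc (⇑f) A n y)⁻¹ : (V →L[ℝ] V)ˣ) : V →L[ℝ] V)‖ *
            ‖((coc (⇑f) A n x : (V →L[ℝ] V)ˣ) : V →L[ℝ] V)‖ *
            dist ((⇑f)^[n] x) ((⇑f)^[n] y) ^ β ≤ L * θ ^ n * dist x y ^ β ∧
        ‖(((coc (⇑f) A n x)⁻¹ : (V →L[ℝ] V)ˣ) : V →L[ℝ] V)‖ *
            ‖((coc (⇑f) A n y : (V →L[ℝ] V)ˣ) : V →L[ℝ] V)‖ *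
            dist ((⇑f)^[n] x) ((⇑f)^[n] y) ^ β ≤ L * θ ^ n * dist x y ^ β) :
    ∃ Hxy Hyx : V →L[ℝ] V,
      Tendsto (fun n : ℕ =>
          (((coc (⇑f) A n y)⁻¹ * coc (⇑f) A n x : (V →L[ℝ] V)ˣ) : V →L[ℝ] V))
        atTop (𝓝 Hxy) ∧
      Tendsto (fun n : ℕ =>
          (((coc (⇑f) A n x)⁻¹ * coc (⇑f) A n y : (V →L[ℝ] V)ˣ) : V →L[ℝ] V))
        atTop (𝓝 Hyx) ∧
      Hyx * Hxy = 1 ∧ Hxy * Hyx = 1 ∧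
      ‖Hxy - 1‖ ≤ c * L * (1 - θ)⁻¹ * dist x y ^ β := by
  obtain ⟨Hxy, hxyT, hxyN⟩ :=
    holonomy_aux (⇑f) A x y β c L θ (dist x y ^ β) hc hθ0 hθ1
      (fun n => (ha n).1) (fun n => (hb n).1)
  obtain ⟨Hyx, hyxT, _⟩ :=
    holonomy_aux (⇑f) A y x β c L θ (dist x y ^ β) hc hθ0 hθ1
      (fun n => by simpa [dist_comm] using (ha n).2)
      (fun n => by simpa [dist_comm] using (hb n).2)
  have hinv1 : ∀ n : ℕ,
      (((coc (⇑f) A n x)⁻¹ * coc (⇑f) A n y : (V →L[ℝ] V)ˣ) : V →L[ℝ] V) *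
        (((coc (⇑f) A n y)⁻¹ * coc (⇑f) A n x : (V →L[ℝ] V)ˣ) : V →L[ℝ] V) = 1 := by
    intro n
    rw [← Units.val_mul]
    have : ((coc (⇑f) A n x)⁻¹ * coc (⇑f) A n y) *
        ((coc (⇑f) A n y)⁻¹ * coc (⇑f) A n x) = (1 : (V →L[ℝ] V)ˣ) := by group
    rw [this, Units.val_one]
  have hinv2 : ∀ n : ℕ,
      (((coc (⇑f) A n y)⁻¹ * coc (⇑f) A n x : (V →L[ℝ] V)ˣ) : V →L[ℝ] V) *
        (((coc (⇑f) A n x)⁻¹ * coc (⇑f) A n y : (V →L[ℝ] V)ˣ) : V →L[ℝ] V) = 1 := by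
    intro n
    rw [← Units.val_mul]
    have : ((coc (⇑f) A n y)⁻¹ * coc (⇑f) A n x) *
        ((coc (⇑f) A n x)⁻¹ * coc (⇑f) A n y) = (1 : (V →L[ℝ] V)ˣ) := by group
    rw [this, Units.val_one]
  refine ⟨Hxy, Hyx, hxyT, hyxT, ?_, ?_, hxyN⟩
  · refine tendsto_nhds_unique (hyxT.mul hxyT) ?_
    simpa only [hinv1] using tendsto_const_nhds (x := (1 : V →L[ℝ] V)) (f := atTop)
  · refine tendsto_nhds_unique (hxyT.mul hyxT) ?_
    simpa only [hinv2] using tendsto_const_nhds (x := (1 : V →L[ℝ] V)) (f := atTop)
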